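/- Let C be a deducibility constraint system, θ a solution of C, and Ti a left-hand side of a constraint of C such that for every (T ⊩ v) ∈ C with T ⊊ Ti, the term v is a variable. Let u be any term. If there is a simple proof of Tiθ ⊢ u whose last inference rule is a decomposition (symmetric decryption, asymmetric decryption, or a projection), then there is a non-variable subterm t of Ti such that tθ = u. -/

import Mathlib

open scoped Classical

/-- Terms built from names, variables, pairing, symmetric/asymmetric encryption,
signatures and private keys. -/
inductive Tm where
  | var : ℕ → Tm
  | name : ℕ → Tm
  | pair : Tm → Tm → Tm
  | enc : Tm → Tm → Tm
  | enca : Tm → Tm → Tm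
  | sign : Tm → Tm → Tm
  | priv : Tm → Tm
deriving DecidableEq

namespace Tm

/-- The variables of a term. -/
def vars : Tm → Finset ℕ
  | var x => {x}
  | name _ => ∅
  | pair s t => s.vars ∪ t.vars
  | enc s t => s.vars ∪ t.vars
  | enca s t => s.vars ∪ t.vars
  | sign s t => s.vars ∪ t.vars
  | priv t => t.vars

/-- The subterms of a term. -/
def subterms : Tm → Finset Tm
  | var x => {var x}
  | name a => {name a}
  | pair s t => insert (pair s t) (s.subterms ∪ t.subterms)
  | enc s t => insert (enc s t) (s.subterms ∪ t.subterms)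
  | enca s t => insert (enca s t) (s.subterms ∪ t.subterms)
  | sign s t => insert (sign s t) (s.subterms ∪ t.subterms)
  | priv t => insert (priv t) t.subterms

/-- A term is a variable. -/
def IsVar : Tm → Prop
  | var _ => True
  | _ => False

end Tm

/-- The Dolev-Yao deduction relation `T ⊢ u`. -/
inductive Deduce : Finset Tm → Tm → Prop where
  | ax {T u} : u ∈ T → Deduce T u
  | pairI {T x y} : Deduce T x → Deduce T y → Deduce T (Tm.pair x y)
  | encI {T x y} : Deduce T x → Deduce T y → Deduce T (Tm.enc x y)
  | encaI {T x y} : Deduce T x → Deduce T y → Deduce T (Tm.enca x y)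
  | signI {T x y} : Deduce T x → Deduce T y → Deduce T (Tm.sign x y)
  | encE {T x y} : Deduce T (Tm.enc x y) → Deduce T y → Deduce T x
  | encaE {T x y} : Deduce T (Tm.enca x y) → Deduce T (Tm.priv y) → Deduce T x
  | fstE {T x y} : Deduce T (Tm.pair x y) → Deduce T x
  | sndE {T x y} : Deduce T (Tm.pair x y) → Deduce T y

/-- Substitutions. -/
def Subst := ℕ → Tm

/-- Applying a substitution to a term. -/
def Tm.subst (σ : Subst) : Tm → Tm
  | .var x => σ x
  | .name a => .name a
  | .pair s t => .pair (s.subst σ) (t.subst σ)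
  | .enc s t => .enc (s.subst σ) (t.subst σ)
  | .enca s t => .enca (s.subst σ) (t.subst σ)
  | .sign s t => .sign (s.subst σ) (t.subst σ)
  | .priv t => .priv (t.subst σ)

/-- The identity substitution. -/
def idSubst : Subst := Tm.var

/-- Composition of substitutions: `σ.comp τ` applies `σ` first, then `τ`. -/
def Subst.comp (σ τ : Subst) : Subst := fun x => (σ x).subst τ

/-- The variables of a finite set of terms. -/
def setVars (T : Finset Tm) : Finset ℕ := T.sup Tm.vars

/-- The subterms of a finite set of terms. -/
def stSet (T : Finset Tm) : Finset Tm := T.sup Tm.subterms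

/-- A deducibility constraint `T ⊩ u`: a (nonempty) finite set of terms and a term. -/
abbrev Cst := Finset Tm × Tm

/-- Applying a substitution to a constraint. -/
def conSubst (σ : Subst) (c : Cst) : Cst := (c.1.image (Tm.subst σ), c.2.subst σ)

/-- Applying a substitution to a constraint system. -/
def csSubst (σ : Subst) (S : Finset Cst) : Finset Cst := S.image (conSubst σ)

/-- The variables of a constraint system. -/
def sysVars (C : Finset Cst) : Finset ℕ := C.sup (fun c => setVars c.1 ∪ c.2.vars)

/-- The set `{x | (T' ⊩ x) ∈ S, T' ⊊ T}` of variables (as terms) occurring as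
right-hand sides of constraints of `S` whose left-hand side is strictly contained in `T`. -/
noncomputable def extraVars (S : Finset Cst) (T : Finset Tm) : Finset Tm :=
  (S.filter (fun c => c.1 ⊂ T ∧ c.2.IsVar)).image Prod.snd

/-- `C` is a deducibility constraint system: left-hand sides are nonempty,
totally ordered by inclusion, and every variable of a left-hand side `T` occurs in
the right-hand side of a constraint whose left-hand side is minimal among those whose
right-hand side contains the variable, and strictly included in `T`. -/
def IsCS (C : Finset Cst) : Prop :=
  (∀ c ∈ C, c.1.Nonempty) ∧
  (∀ c ∈ C, ∀ c' ∈ C, c.1 ⊆ c'.1 ∨ c'.1 ⊆ c.1) ∧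
  (∀ c ∈ C, ∀ x ∈ setVars c.1,
    ∃ c' ∈ C, x ∈ c'.2.vars ∧ c'.1 ⊂ c.1 ∧
      ∀ c'' ∈ C, x ∈ c''.2.vars → c'.1 ⊆ c''.1)

/-- A solution of a constraint system: a ground substitution whose domain is `V(C)`
such that `Tθ ⊢ uθ` for every constraint `(T ⊩ u) ∈ C`. -/
def IsSolution (θ : Subst) (C : Finset Cst) : Prop :=
  (∀ x ∈ sysVars C, (θ x).vars = ∅) ∧
  (∀ x, x ∉ sysVars C → θ x = Tm.var x) ∧
  (∀ c ∈ C, Deduce (c.1.image (Tm.subst θ)) (c.2.subst θ))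

/-- A (non-`⊥`) constraint system is solved if all right-hand sides are variables. -/
def Solved (C : Finset Cst) : Prop := ∀ c ∈ C, c.2.IsVar

/-- `σ` is a most general unifier of `t` and `u`. -/
def IsMGU (σ : Subst) (t u : Tm) : Prop :=
  t.subst σ = u.subst σ ∧
  (∀ x, x ∉ t.vars ∪ u.vars → σ x = Tm.var x) ∧
  (∀ x, (σ x).vars ⊆ t.vars ∪ u.vars) ∧
  (∀ δ : Subst, t.subst δ = u.subst δ → ∃ ρ : Subst, ∀ x, δ x = (σ x).subst ρ)

/-- The binary constructors `pair`, `enc`, `enca`, `sign`. -/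
inductive BinOp where
  | pair | enc | enca | sign

def BinOp.app : BinOp → Tm → Tm → Tm
  | .pair => Tm.pair
  | .enc => Tm.enc
  | .enca => Tm.enca
  | .sign => Tm.sign

/-- One step of simplification `C ⇝_σ C'` (result `none` represents `⊥`),
given by the rules R1, R2, R3, R3', R4, Rf. -/
inductive Step : Finset Cst → Subst → Option (Finset Cst) → Prop where
  | r1 {S : Finset Cst} {T : Finset Tm} {u : Tm} :
      (T, u) ∈ S →
      Deduce (T ∪ extraVars (S.erase (T, u)) T) u →
      Step S idSubst (some (S.erase (T, u)))
  | r2 {S : Finset Cst} {T : Finset Tm} {u t : Tm} {σ : Subst} :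
      (T, u) ∈ S → t ∈ stSet T → ¬ t.IsVar → ¬ u.IsVar → t ≠ u →
      IsMGU σ t u →
      Step S σ (some (csSubst σ S))
  | r3 {S : Finset Cst} {T : Finset Tm} {u t₁ t₂ : Tm} {σ : Subst} :
      (T, u) ∈ S → t₁ ∈ stSet T → t₂ ∈ stSet T → ¬ t₁.IsVar → ¬ t₂.IsVar →
      t₁ ≠ t₂ → IsMGU σ t₁ t₂ →
      Step S σ (some (csSubst σ S))
  | r3' {S : Finset Cst} {T : Finset Tm} {u t₁ t₂ t₃ : Tm} {σ : Subst} :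
      (T, u) ∈ S → Tm.enca t₁ t₂ ∈ stSet T → Tm.priv t₃ ∈ stSet T →
      t₂ ≠ t₃ → (t₂.IsVar ∨ t₃.IsVar) → IsMGU σ t₂ t₃ →
      Step S σ (some (csSubst σ S))
  | r4 {S : Finset Cst} {T : Finset Tm} {u : Tm} :
      (T, u) ∈ S → setVars T ∪ u.vars = ∅ → ¬ Deduce T u →
      Step S idSubst none
  | rf {S : Finset Cst} {T : Finset Tm} {u v : Tm} (b : BinOp) :
      (T, b.app u v) ∈ S →
      Step S idSubst (some (insert (T, u) (insert (T, v) (S.erase (T, b.app u v)))))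

/-- Sequences of simplification steps `C ⇝*_σ C'`, composing the substitutions. -/
inductive Steps : Finset Cst → Subst → Option (Finset Cst) → Prop where
  | refl (S) : Steps S idSubst (some S)
  | tail {S : Finset Cst} {σ : Subst} {S' : Finset Cst} {τ : Subst} {R} :
      Steps S σ (some S') → Step S' τ R → Steps S (σ.comp τ) R

/-- A security property, identified with its set of solutions (ground substitutions
making it true); `θ` solves `φσ` iff `σθ` solves `φ`. -/
def SecProp := Subst → Prop

/-- The instance `φσ` of a security property `φ` by a substitution `σ`. -/
def SecProp.subst (φ : SecProp) (σ : Subst) : SecProp := fun θ => φ (σ.comp θ)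

/-- `θ` is an attack for `φ` and `C` if it is a solution of both. -/
def IsAttack (θ : Subst) (C : Finset Cst) (φ : SecProp) : Prop :=
  IsSolution θ C ∧ φ θ

/-- One memorizing simplification step: `C;D ⇒_σ (C' \ D); (D ∪ (C \ C'))`. -/
inductive MStep : Finset Cst × Finset Cst → Subst → Finset Cst × Finset Cst → Prop where
  | mk {C D C' : Finset Cst} {σ : Subst} :
      Step C σ (some C') → MStep (C, D) σ (C' \ D, D ∪ (C \ C'))

/-- Sequences of memorizing simplification steps, composing the substitutions. -/
inductive MSteps : Finset Cst × Finset Cst → Subst → Finset Cst × Finset Cst → Prop where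
  | refl (P) : MSteps P idSubst P
  | tail {P : Finset Cst × Finset Cst} {σ : Subst} {Q : Finset Cst × Finset Cst}
      {τ : Subst} {R : Finset Cst × Finset Cst} :
      MSteps P σ Q → MStep Q τ R → MSteps P (σ.comp τ) R

/-- Proof trees for the Dolev-Yao deduction system (the left-hand side `T` is
the same in all sequents of a proof). -/
inductive PTree (T : Finset Tm) : Tm → Type where
  | ax {u} : u ∈ T → PTree T u
  | pairI {x y} : PTree T x → PTree T y → PTree T (Tm.pair x y)
  | encI {x y} : PTree T x → PTree T y → PTree T (Tm.enc x y)
  | encaI {x y} : PTree T x → PTree T y → PTree T (Tm.enca x y)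
  | signI {x y} : PTree T x → PTree T y → PTree T (Tm.sign x y)
  | encE {x y} : PTree T (Tm.enc x y) → PTree T y → PTree T x
  | encaE {x y} : PTree T (Tm.enca x y) → PTree T (Tm.priv y) → PTree T x
  | fstE {x y} : PTree T (Tm.pair x y) → PTree T x
  | sndE {x y} : PTree T (Tm.pair x y) → PTree T y

/-- The immediate subproof (child) relation on proof trees. -/
inductive Child (T : Finset Tm) : (Σ u : Tm, PTree T u) → (Σ u : Tm, PTree T u) → Prop where
  | pairI₁ {x y} (p : PTree T x) (q : PTree T y) : Child T ⟨x, p⟩ ⟨Tm.pair x y, .pairI p q⟩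
  | pairI₂ {x y} (p : PTree T x) (q : PTree T y) : Child T ⟨y, q⟩ ⟨Tm.pair x y, .pairI p q⟩
  | encI₁ {x y} (p : PTree T x) (q : PTree T y) : Child T ⟨x, p⟩ ⟨Tm.enc x y, .encI p q⟩
  | encI₂ {x y} (p : PTree T x) (q : PTree T y) : Child T ⟨y, q⟩ ⟨Tm.enc x y, .encI p q⟩
  | encaI₁ {x y} (p : PTree T x) (q : PTree T y) : Child T ⟨x, p⟩ ⟨Tm.enca x y, .encaI p q⟩
  | encaI₂ {x y} (p : PTree T x) (q : PTree T y) : Child T ⟨y, q⟩ ⟨Tm.enca x y, .encaI p q⟩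
  | signI₁ {x y} (p : PTree T x) (q : PTree T y) : Child T ⟨x, p⟩ ⟨Tm.sign x y, .signI p q⟩
  | signI₂ {x y} (p : PTree T x) (q : PTree T y) : Child T ⟨y, q⟩ ⟨Tm.sign x y, .signI p q⟩
  | encE₁ {x y} (p : PTree T (Tm.enc x y)) (q : PTree T y) :
      Child T ⟨Tm.enc x y, p⟩ ⟨x, .encE p q⟩
  | encE₂ {x y} (p : PTree T (Tm.enc x y)) (q : PTree T y) :
      Child T ⟨y, q⟩ ⟨x, .encE p q⟩
  | encaE₁ {x y} (p : PTree T (Tm.enca x y)) (q : PTree T (Tm.priv y)) :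
      Child T ⟨Tm.enca x y, p⟩ ⟨x, .encaE p q⟩
  | encaE₂ {x y} (p : PTree T (Tm.enca x y)) (q : PTree T (Tm.priv y)) :
      Child T ⟨Tm.priv y, q⟩ ⟨x, .encaE p q⟩
  | fstE₁ {x y} (p : PTree T (Tm.pair x y)) : Child T ⟨Tm.pair x y, p⟩ ⟨x, .fstE p⟩
  | sndE₁ {x y} (p : PTree T (Tm.pair x y)) : Child T ⟨Tm.pair x y, p⟩ ⟨y, .sndE p⟩

/-- `a` is a subproof of `b`. -/
def Subproof {T : Finset Tm} (a b : Σ u : Tm, PTree T u) : Prop :=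
  Relation.ReflTransGen (Child T) a b

/-- `a` is a strict subproof of `b`. -/
def StrictSubproof {T : Finset Tm} (a b : Σ u : Tm, PTree T u) : Prop :=
  Relation.TransGen (Child T) a b

/-- The set of terms used at axiom leaves of a proof tree. -/
def axLeaves {T : Finset Tm} : ∀ {u : Tm}, PTree T u → Set Tm
  | u, .ax _ => {u}
  | _, .pairI p q => axLeaves p ∪ axLeaves q
  | _, .encI p q => axLeaves p ∪ axLeaves q
  | _, .encaI p q => axLeaves p ∪ axLeaves q
  | _, .signI p q => axLeaves p ∪ axLeaves q
  | _, .encE p q => axLeaves p ∪ axLeaves q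
  | _, .encaE p q => axLeaves p ∪ axLeaves q
  | _, .fstE p => axLeaves p
  | _, .sndE p => axLeaves p

/-- No label (conclusion) is repeated along any branch of `π`. -/
def NoRepeat {T : Finset Tm} {u : Tm} (π : PTree T u) : Prop :=
  ∀ a b : Σ v : Tm, PTree T v, Subproof a ⟨u, π⟩ → StrictSubproof b a → b.1 ≠ a.1

/-- The last rule of a proof tree is a decomposition (symmetric decryption,
asymmetric decryption, or a projection). -/
def lastIsDecomp {T : Finset Tm} : ∀ {u : Tm}, PTree T u → Prop
  | _, .encE _ _ => True
  | _, .encaE _ _ => True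
  | _, .fstE _ => True
  | _, .sndE _ => True
  | _, _ => False

/-- Left minimality of a subproof `a` of a proof over the left-hand side `S`,
relative to the family `F` of (instantiated) left-hand sides: whenever `T' ⊢ concl(a)`
is derivable for some `T' ∈ F` with `T' ⊊ S`, replacing `S` by `T'` in all left
members still yields a proof, i.e. all axiom leaves of `a` belong to `T'`. -/
def LeftMinimalFam (F : Set (Finset Tm)) (S : Finset Tm)
    (a : Σ v : Tm, PTree S v) : Prop :=
  ∀ T' ∈ F, T' ⊂ S → Deduce T' a.1 → axLeaves a.2 ⊆ ↑T'

/-- A proof of `S ⊢ u` is simple (w.r.t. the family `F`) if all its subproofs are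
left minimal and no label is repeated on any branch. -/
def SimpleFam (F : Set (Finset Tm)) (S : Finset Tm) {u : Tm} (π : PTree S u) : Prop :=
  (∀ a : Σ v : Tm, PTree S v, Subproof a ⟨u, π⟩ → LeftMinimalFam F S a) ∧ NoRepeat π

section Aux

lemma Tm.self_mem_subterms (t : Tm) : t ∈ t.subterms := by
  cases t <;> simp [Tm.subterms]

lemma Tm.subterms_trans {s t : Tm} (h : s ∈ t.subterms) : s.subterms ⊆ t.subterms := by
  induction t with
  | var x => simp [Tm.subterms] at h; subst h; simp [Tm.subterms]
  | name a => simp [Tm.subterms] at h; subst h; simp [Tm.subterms]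
  | pair a b iha ihb | enc a b iha ihb | enca a b iha ihb | sign a b iha ihb =>
      simp [Tm.subterms] at h
      rcases h with h | h | h
      · subst h; exact Finset.Subset.refl _
      · exact (iha h).trans (by intro z hz; simp [Tm.subterms]; right; left; exact hz)
      · exact (ihb h).trans (by intro z hz; simp [Tm.subterms]; right; right; exact hz)
  | priv a iha =>
      simp [Tm.subterms] at h
      rcases h with h | h
      · subst h; exact Finset.Subset.refl _
      · exact (iha h).trans (by intro z hz; simp [Tm.subterms]; right; exact hz)

lemma Tm.vars_subterm {s t : Tm} (h : s ∈ t.subterms) : s.vars ⊆ t.vars := by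
  induction t with
  | var x => simp [Tm.subterms] at h; subst h; exact Finset.Subset.refl _
  | name a => simp [Tm.subterms] at h; subst h; exact Finset.Subset.refl _
  | pair a b iha ihb | enc a b iha ihb | enca a b iha ihb | sign a b iha ihb =>
      simp [Tm.subterms] at h
      rcases h with h | h | h
      · subst h; exact Finset.Subset.refl _
      · exact (iha h).trans (by simp [Tm.vars])
      · exact (ihb h).trans (by simp [Tm.vars])
  | priv a iha =>
      simp [Tm.subterms] at h
      rcases h with h | h
      · subst h; exact Finset.Subset.refl _
      · exact (iha h).trans (by simp [Tm.vars])

lemma mem_stSet_of_mem {T : Finset Tm} {t : Tm} (h : t ∈ T) : t ∈ stSet T :=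
  Finset.mem_sup.mpr ⟨t, h, Tm.self_mem_subterms t⟩

lemma stSet_closed {T : Finset Tm} {t s : Tm} (ht : t ∈ stSet T) (hs : s ∈ t.subterms) :
    s ∈ stSet T := by
  rcases Finset.mem_sup.mp ht with ⟨r, hr, htr⟩
  exact Finset.mem_sup.mpr ⟨r, hr, Tm.subterms_trans htr hs⟩

lemma stSet_mono {T T' : Finset Tm} (h : T ⊆ T') : stSet T ⊆ stSet T' :=
  Finset.le_iff_subset.mp (Finset.sup_mono h)

lemma vars_subset_setVars {T : Finset Tm} {t : Tm} (ht : t ∈ stSet T) :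
    t.vars ⊆ setVars T := by
  rcases Finset.mem_sup.mp ht with ⟨r, hr, htr⟩
  exact (Tm.vars_subterm htr).trans (Finset.le_iff_subset.mp (Finset.le_sup hr))

lemma subst_eq_enc {σ : Subst} {s u y : Tm} (hs : ¬ s.IsVar) (h : s.subst σ = .enc u y) :
    ∃ a b, s = .enc a b ∧ a.subst σ = u ∧ b.subst σ = y := by
  cases s <;> simp_all [Tm.subst, Tm.IsVar]

lemma subst_eq_enca {σ : Subst} {s u y : Tm} (hs : ¬ s.IsVar) (h : s.subst σ = .enca u y) :
    ∃ a b, s = .enca a b ∧ a.subst σ = u ∧ b.subst σ = y := by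
  cases s <;> simp_all [Tm.subst, Tm.IsVar]

lemma subst_eq_pair {σ : Subst} {s u y : Tm} (hs : ¬ s.IsVar) (h : s.subst σ = .pair u y) :
    ∃ a b, s = .pair a b ∧ a.subst σ = u ∧ b.subst σ = y := by
  cases s <;> simp_all [Tm.subst, Tm.IsVar]

/-- All labels (conclusions of subproofs) of a proof tree. -/
def labels {T : Finset Tm} : ∀ {u : Tm}, PTree T u → Set Tm
  | u, .ax _ => {u}
  | _, @PTree.pairI _ x y p q => insert (Tm.pair x y) (labels p ∪ labels q)
  | _, @PTree.encI _ x y p q => insert (Tm.enc x y) (labels p ∪ labels q)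
  | _, @PTree.encaI _ x y p q => insert (Tm.enca x y) (labels p ∪ labels q)
  | _, @PTree.signI _ x y p q => insert (Tm.sign x y) (labels p ∪ labels q)
  | _, @PTree.encE _ x y p q => insert x (labels p ∪ labels q)
  | _, @PTree.encaE _ x y p q => insert x (labels p ∪ labels q)
  | _, @PTree.fstE _ x y p => insert x (labels p)
  | _, @PTree.sndE _ x y p => insert y (labels p)

lemma self_mem_labels {T : Finset Tm} {u : Tm} (π : PTree T u) : u ∈ labels π := by
  cases π <;> simp [labels]

lemma labels_subproof {T : Finset Tm} :
    ∀ {u : Tm} (π : PTree T u) {w : Tm}, w ∈ labels π →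
      ∃ p : PTree T w, Subproof ⟨w, p⟩ ⟨u, π⟩ := by
  intro u π
  induction π with
  | ax h => intro w hw; simp [labels] at hw; subst hw; exact ⟨.ax h, .refl⟩
  | pairI p q ihp ihq =>
      intro w hw
      simp only [labels, Set.mem_insert_iff, Set.mem_union] at hw
      rcases hw with rfl | hw | hw
      · exact ⟨_, .refl⟩
      · rcases ihp hw with ⟨p', hp'⟩; exact ⟨p', hp'.tail (Child.pairI₁ p q)⟩
      · rcases ihq hw with ⟨q', hq'⟩; exact ⟨q', hq'.tail (Child.pairI₂ p q)⟩
  | encI p q ihp ihq =>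
      intro w hw
      simp only [labels, Set.mem_insert_iff, Set.mem_union] at hw
      rcases hw with rfl | hw | hw
      · exact ⟨_, .refl⟩
      · rcases ihp hw with ⟨p', hp'⟩; exact ⟨p', hp'.tail (Child.encI₁ p q)⟩
      · rcases ihq hw with ⟨q', hq'⟩; exact ⟨q', hq'.tail (Child.encI₂ p q)⟩
  | encaI p q ihp ihq =>
      intro w hw
      simp only [labels, Set.mem_insert_iff, Set.mem_union] at hw
      rcases hw with rfl | hw | hw
      · exact ⟨_, .refl⟩
      · rcases ihp hw with ⟨p', hp'⟩; exact ⟨p', hp'.tail (Child.encaI₁ p q)⟩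
      · rcases ihq hw with ⟨q', hq'⟩; exact ⟨q', hq'.tail (Child.encaI₂ p q)⟩
  | signI p q ihp ihq =>
      intro w hw
      simp only [labels, Set.mem_insert_iff, Set.mem_union] at hw
      rcases hw with rfl | hw | hw
      · exact ⟨_, .refl⟩
      · rcases ihp hw with ⟨p', hp'⟩; exact ⟨p', hp'.tail (Child.signI₁ p q)⟩
      · rcases ihq hw with ⟨q', hq'⟩; exact ⟨q', hq'.tail (Child.signI₂ p q)⟩
  | encE p q ihp ihq =>
      intro w hw
      simp only [labels, Set.mem_insert_iff, Set.mem_union] at hw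
      rcases hw with rfl | hw | hw
      · exact ⟨_, .refl⟩
      · rcases ihp hw with ⟨p', hp'⟩; exact ⟨p', hp'.tail (Child.encE₁ p q)⟩
      · rcases ihq hw with ⟨q', hq'⟩; exact ⟨q', hq'.tail (Child.encE₂ p q)⟩
  | encaE p q ihp ihq =>
      intro w hw
      simp only [labels, Set.mem_insert_iff, Set.mem_union] at hw
      rcases hw with rfl | hw | hw
      · exact ⟨_, .refl⟩
      · rcases ihp hw with ⟨p', hp'⟩; exact ⟨p', hp'.tail (Child.encaE₁ p q)⟩
      · rcases ihq hw with ⟨q', hq'⟩; exact ⟨q', hq'.tail (Child.encaE₂ p q)⟩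
  | fstE p ihp =>
      intro w hw
      simp only [labels, Set.mem_insert_iff] at hw
      rcases hw with rfl | hw
      · exact ⟨_, .refl⟩
      · rcases ihp hw with ⟨p', hp'⟩; exact ⟨p', hp'.tail (Child.fstE₁ p)⟩
  | sndE p ihp =>
      intro w hw
      simp only [labels, Set.mem_insert_iff] at hw
      rcases hw with rfl | hw
      · exact ⟨_, .refl⟩
      · rcases ihp hw with ⟨p', hp'⟩; exact ⟨p', hp'.tail (Child.sndE₁ p)⟩

/-- Left minimality at the root of a proof tree. -/
def MinRoot (F : Set (Finset Tm)) {T : Finset Tm} {u : Tm} (π : PTree T u) : Prop :=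
  ∀ T' ∈ F, T' ⊂ T → Deduce T' u → axLeaves π ⊆ ↑T'

/-- A structurally recursive version of simplicity. -/
def Good (F : Set (Finset Tm)) {T : Finset Tm} : ∀ {u : Tm}, PTree T u → Prop
  | _, .ax h => MinRoot F (.ax h)
  | _, @PTree.pairI _ x y p q => MinRoot F (PTree.pairI p q) ∧ Tm.pair x y ∉ labels p ∪ labels q ∧ Good F p ∧ Good F q
  | _, @PTree.encI _ x y p q => MinRoot F (PTree.encI p q) ∧ Tm.enc x y ∉ labels p ∪ labels q ∧ Good F p ∧ Good F q
  | _, @PTree.encaI _ x y p q => MinRoot F (PTree.encaI p q) ∧ Tm.enca x y ∉ labels p ∪ labels q ∧ Good F p ∧ Good F q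
  | _, @PTree.signI _ x y p q => MinRoot F (PTree.signI p q) ∧ Tm.sign x y ∉ labels p ∪ labels q ∧ Good F p ∧ Good F q
  | _, @PTree.encE _ x y p q => MinRoot F (PTree.encE p q) ∧ x ∉ labels p ∪ labels q ∧ Good F p ∧ Good F q
  | _, @PTree.encaE _ x y p q => MinRoot F (PTree.encaE p q) ∧ x ∉ labels p ∪ labels q ∧ Good F p ∧ Good F q
  | _, @PTree.fstE _ x y p => MinRoot F (PTree.fstE p) ∧ x ∉ labels p ∧ Good F p
  | _, @PTree.sndE _ x y p => MinRoot F (PTree.sndE p) ∧ y ∉ labels p ∧ Good F p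

lemma isVar_var {t : Tm} (h : t.IsVar) : ∃ m, t = Tm.var m := by
  cases t <;> first | exact ⟨_, rfl⟩ | simp [Tm.IsVar] at h

lemma axLeaves_subset {T : Finset Tm} : ∀ {u : Tm} (π : PTree T u), axLeaves π ⊆ ↑T := by
  intro u π
  induction π with
  | ax h =>
      intro t ht
      have ht' : t = _ := ht
      subst ht'
      simpa using h
  | pairI p q ihp ihq => exact Set.union_subset ihp ihq
  | encI p q ihp ihq => exact Set.union_subset ihp ihq
  | encaI p q ihp ihq => exact Set.union_subset ihp ihq
  | signI p q ihp ihq => exact Set.union_subset ihp ihq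
  | encE p q ihp ihq => exact Set.union_subset ihp ihq
  | encaE p q ihp ihq => exact Set.union_subset ihp ihq
  | fstE p ihp => exact ihp
  | sndE p ihp => exact ihp

/-- Relabel a proof tree to a smaller left-hand side containing all its axiom leaves. -/
def relabel {T S : Finset Tm} : ∀ {u : Tm}, (π : PTree T u) → axLeaves π ⊆ ↑S → PTree S u
  | _, .ax _, hs => .ax (hs rfl)
  | _, .pairI p q, hs => .pairI (relabel p (Set.union_subset_iff.mp hs).1) (relabel q (Set.union_subset_iff.mp hs).2)
  | _, .encI p q, hs => .encI (relabel p (Set.union_subset_iff.mp hs).1) (relabel q (Set.union_subset_iff.mp hs).2)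
  | _, .encaI p q, hs => .encaI (relabel p (Set.union_subset_iff.mp hs).1) (relabel q (Set.union_subset_iff.mp hs).2)
  | _, .signI p q, hs => .signI (relabel p (Set.union_subset_iff.mp hs).1) (relabel q (Set.union_subset_iff.mp hs).2)
  | _, .encE p q, hs => .encE (relabel p (Set.union_subset_iff.mp hs).1) (relabel q (Set.union_subset_iff.mp hs).2)
  | _, .encaE p q, hs => .encaE (relabel p (Set.union_subset_iff.mp hs).1) (relabel q (Set.union_subset_iff.mp hs).2)
  | _, .fstE p, hs => .fstE (relabel p (id (α := axLeaves p ⊆ ↑S) hs))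
  | _, .sndE p, hs => .sndE (relabel p (id (α := axLeaves p ⊆ ↑S) hs))

lemma axLeaves_relabel {T S : Finset Tm} :
    ∀ {u : Tm} (π : PTree T u) (h : axLeaves π ⊆ ↑S), axLeaves (relabel π h) = axLeaves π := by
  intro u π
  induction π with
  | ax hx => intro h; rfl
  | pairI p q ihp ihq => intro h; simp [relabel, axLeaves, ihp, ihq]
  | encI p q ihp ihq => intro h; simp [relabel, axLeaves, ihp, ihq]
  | encaI p q ihp ihq => intro h; simp [relabel, axLeaves, ihp, ihq]
  | signI p q ihp ihq => intro h; simp [relabel, axLeaves, ihp, ihq]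
  | encE p q ihp ihq => intro h; simp [relabel, axLeaves, ihp, ihq]
  | encaE p q ihp ihq => intro h; simp [relabel, axLeaves, ihp, ihq]
  | fstE p ihp => intro h; simp [relabel, axLeaves, ihp]
  | sndE p ihp => intro h; simp [relabel, axLeaves, ihp]

lemma labels_relabel {T S : Finset Tm} :
    ∀ {u : Tm} (π : PTree T u) (h : axLeaves π ⊆ ↑S), labels (relabel π h) = labels π := by
  intro u π
  induction π with
  | ax hx => intro h; rfl
  | pairI p q ihp ihq => intro h; simp [relabel, labels, ihp, ihq]
  | encI p q ihp ihq => intro h; simp [relabel, labels, ihp, ihq]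
  | encaI p q ihp ihq => intro h; simp [relabel, labels, ihp, ihq]
  | signI p q ihp ihq => intro h; simp [relabel, labels, ihp, ihq]
  | encE p q ihp ihq => intro h; simp [relabel, labels, ihp, ihq]
  | encaE p q ihp ihq => intro h; simp [relabel, labels, ihp, ihq]
  | fstE p ihp => intro h; simp [relabel, labels, ihp]
  | sndE p ihp => intro h; simp [relabel, labels, ihp]

lemma lastIsDecomp_relabel {T S : Finset Tm} {u : Tm} (π : PTree T u) (h : axLeaves π ⊆ ↑S) :
    lastIsDecomp (relabel π h) ↔ lastIsDecomp π := by
  cases π <;> simp [relabel, lastIsDecomp]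

lemma fssub_trans {a b c : Finset Tm} (h : a ⊂ b) (h' : b ⊆ c) : a ⊂ c :=
  Finset.ssubset_of_ssubset_of_subset h h'

lemma minRoot_relabel {F : Set (Finset Tm)} {T S : Finset Tm} (hST : S ⊆ T) {u : Tm}
    (π : PTree T u) (h : axLeaves π ⊆ ↑S) (hm : MinRoot F π) : MinRoot F (relabel π h) := by
  intro T' hF hlt hded
  rw [axLeaves_relabel]
  exact hm T' hF (fssub_trans hlt hST) hded

lemma good_relabel {F : Set (Finset Tm)} {T S : Finset Tm} (hST : S ⊆ T) :
    ∀ {u : Tm} (π : PTree T u) (h : axLeaves π ⊆ ↑S), Good F π → Good F (relabel π h) := by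
  intro u π
  induction π with
  | ax hx => intro h hg; exact minRoot_relabel hST _ h hg
  | pairI p q ihp ihq =>
      intro h hg
      exact ⟨minRoot_relabel hST _ h hg.1,
        by rw [labels_relabel, labels_relabel]; exact hg.2.1, ihp _ hg.2.2.1, ihq _ hg.2.2.2⟩
  | encI p q ihp ihq =>
      intro h hg
      exact ⟨minRoot_relabel hST _ h hg.1,
        by rw [labels_relabel, labels_relabel]; exact hg.2.1, ihp _ hg.2.2.1, ihq _ hg.2.2.2⟩
  | encaI p q ihp ihq =>
      intro h hg
      exact ⟨minRoot_relabel hST _ h hg.1,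
        by rw [labels_relabel, labels_relabel]; exact hg.2.1, ihp _ hg.2.2.1, ihq _ hg.2.2.2⟩
  | signI p q ihp ihq =>
      intro h hg
      exact ⟨minRoot_relabel hST _ h hg.1,
        by rw [labels_relabel, labels_relabel]; exact hg.2.1, ihp _ hg.2.2.1, ihq _ hg.2.2.2⟩
  | encE p q ihp ihq =>
      intro h hg
      exact ⟨minRoot_relabel hST _ h hg.1,
        by rw [labels_relabel, labels_relabel]; exact hg.2.1, ihp _ hg.2.2.1, ihq _ hg.2.2.2⟩
  | encaE p q ihp ihq =>
      intro h hg
      exact ⟨minRoot_relabel hST _ h hg.1,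
        by rw [labels_relabel, labels_relabel]; exact hg.2.1, ihp _ hg.2.2.1, ihq _ hg.2.2.2⟩
  | fstE p ihp =>
      intro h hg
      exact ⟨minRoot_relabel hST _ h hg.1, by rw [labels_relabel]; exact hg.2.1, ihp _ hg.2.2⟩
  | sndE p ihp =>
      intro h hg
      exact ⟨minRoot_relabel hST _ h hg.1, by rw [labels_relabel]; exact hg.2.1, ihp _ hg.2.2⟩

lemma simple_good {F : Set (Finset Tm)} {T : Finset Tm} {u₀ : Tm} {π₀ : PTree T u₀}
    (hs : SimpleFam F T π₀) :
    ∀ {u : Tm} (π : PTree T u), Subproof ⟨u, π⟩ ⟨u₀, π₀⟩ → Good F π := by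
  intro u π
  induction π with
  | ax h => intro hsub; exact hs.1 _ hsub
  | pairI p q ihp ihq =>
      intro hsub
      refine ⟨hs.1 _ hsub, ?_, ihp (.head (Child.pairI₁ p q) hsub), ihq (.head (Child.pairI₂ p q) hsub)⟩
      rintro (hm | hm)
      · obtain ⟨p', hp'⟩ := labels_subproof p hm
        exact hs.2 _ _ hsub (Relation.TransGen.tail' hp' (Child.pairI₁ p q)) rfl
      · obtain ⟨q', hq'⟩ := labels_subproof q hm
        exact hs.2 _ _ hsub (Relation.TransGen.tail' hq' (Child.pairI₂ p q)) rfl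
  | encI p q ihp ihq =>
      intro hsub
      refine ⟨hs.1 _ hsub, ?_, ihp (.head (Child.encI₁ p q) hsub), ihq (.head (Child.encI₂ p q) hsub)⟩
      rintro (hm | hm)
      · obtain ⟨p', hp'⟩ := labels_subproof p hm
        exact hs.2 _ _ hsub (Relation.TransGen.tail' hp' (Child.encI₁ p q)) rfl
      · obtain ⟨q', hq'⟩ := labels_subproof q hm
        exact hs.2 _ _ hsub (Relation.TransGen.tail' hq' (Child.encI₂ p q)) rfl
  | encaI p q ihp ihq =>
      intro hsub
      refine ⟨hs.1 _ hsub, ?_, ihp (.head (Child.encaI₁ p q) hsub), ihq (.head (Child.encaI₂ p q) hsub)⟩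
      rintro (hm | hm)
      · obtain ⟨p', hp'⟩ := labels_subproof p hm
        exact hs.2 _ _ hsub (Relation.TransGen.tail' hp' (Child.encaI₁ p q)) rfl
      · obtain ⟨q', hq'⟩ := labels_subproof q hm
        exact hs.2 _ _ hsub (Relation.TransGen.tail' hq' (Child.encaI₂ p q)) rfl
  | signI p q ihp ihq =>
      intro hsub
      refine ⟨hs.1 _ hsub, ?_, ihp (.head (Child.signI₁ p q) hsub), ihq (.head (Child.signI₂ p q) hsub)⟩
      rintro (hm | hm)
      · obtain ⟨p', hp'⟩ := labels_subproof p hm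
        exact hs.2 _ _ hsub (Relation.TransGen.tail' hp' (Child.signI₁ p q)) rfl
      · obtain ⟨q', hq'⟩ := labels_subproof q hm
        exact hs.2 _ _ hsub (Relation.TransGen.tail' hq' (Child.signI₂ p q)) rfl
  | encE p q ihp ihq =>
      intro hsub
      refine ⟨hs.1 _ hsub, ?_, ihp (.head (Child.encE₁ p q) hsub), ihq (.head (Child.encE₂ p q) hsub)⟩
      rintro (hm | hm)
      · obtain ⟨p', hp'⟩ := labels_subproof p hm
        exact hs.2 _ _ hsub (Relation.TransGen.tail' hp' (Child.encE₁ p q)) rfl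
      · obtain ⟨q', hq'⟩ := labels_subproof q hm
        exact hs.2 _ _ hsub (Relation.TransGen.tail' hq' (Child.encE₂ p q)) rfl
  | encaE p q ihp ihq =>
      intro hsub
      refine ⟨hs.1 _ hsub, ?_, ihp (.head (Child.encaE₁ p q) hsub), ihq (.head (Child.encaE₂ p q) hsub)⟩
      rintro (hm | hm)
      · obtain ⟨p', hp'⟩ := labels_subproof p hm
        exact hs.2 _ _ hsub (Relation.TransGen.tail' hp' (Child.encaE₁ p q)) rfl
      · obtain ⟨q', hq'⟩ := labels_subproof q hm
        exact hs.2 _ _ hsub (Relation.TransGen.tail' hq' (Child.encaE₂ p q)) rfl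
  | fstE p ihp =>
      intro hsub
      refine ⟨hs.1 _ hsub, ?_, ihp (.head (Child.fstE₁ p) hsub)⟩
      intro hm
      obtain ⟨p', hp'⟩ := labels_subproof p hm
      exact hs.2 _ _ hsub (Relation.TransGen.tail' hp' (Child.fstE₁ p)) rfl
  | sndE p ihp =>
      intro hsub
      refine ⟨hs.1 _ hsub, ?_, ihp (.head (Child.sndE₁ p) hsub)⟩
      intro hm
      obtain ⟨p', hp'⟩ := labels_subproof p hm
      exact hs.2 _ _ hsub (Relation.TransGen.tail' hp' (Child.sndE₁ p)) rfl

/-- Chasing a variable member down the chain of smaller constraints. -/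
lemma varChase (C : Finset Cst) (hC : IsCS C) (θ : Subst) (hθ : IsSolution θ C)
    (Ti : Finset Tm) (hbelow : ∀ c ∈ C, c.1 ⊂ Ti → c.2.IsVar) (v : Tm)
    (Hv : ∀ c' ∈ C, c'.1 ⊆ Ti → Deduce (c'.1.image (Tm.subst θ)) v →
      v ∈ c'.1.image (Tm.subst θ)) :
    ∀ (n : ℕ) (T : Finset Tm) (r : Tm), T.card ≤ n → (T, r) ∈ C → T ⊆ Ti →
      v ∈ T.image (Tm.subst θ) →
      ∃ t ∈ stSet Ti, ¬ t.IsVar ∧ t.subst θ = v := by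
  intro n
  induction n with
  | zero =>
      intro T r hcard hmem hsub hv
      rcases Finset.mem_image.mp hv with ⟨s, hsT, -⟩
      rw [Finset.card_eq_zero.mp (Nat.le_zero.mp hcard)] at hsT
      simp at hsT
  | succ n ih =>
      intro T r hcard hmem hsub hv
      rcases Finset.mem_image.mp hv with ⟨s, hsT, hsv⟩
      by_cases hvar : s.IsVar
      · obtain ⟨x, rfl⟩ := isVar_var hvar
        have hx : x ∈ setVars T := Finset.mem_sup.mpr ⟨_, hsT, by simp [Tm.vars]⟩
        obtain ⟨c', hc'C, hxc', hlt, -⟩ := hC.2.2 (T, r) hmem x hx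
        obtain ⟨k, hk⟩ := isVar_var (hbelow c' hc'C (fssub_trans hlt hsub))
        have hkm : k = x := by rw [hk] at hxc'; simp [Tm.vars] at hxc'; exact hxc'.symm
        subst hkm
        have hded : Deduce (c'.1.image (Tm.subst θ)) v := by
          have h2 := hθ.2.2 c' hc'C
          rw [hk] at h2
          have hv' : θ k = v := hsv
          rw [show (Tm.var k).subst θ = θ k from rfl, hv'] at h2
          exact h2
        have hvin := Hv c' hc'C (hlt.subset.trans hsub) hded
        exact ih c'.1 c'.2
          (Nat.lt_succ_iff.mp (lt_of_lt_of_le (Finset.card_lt_card hlt) hcard))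
          hc'C (hlt.subset.trans hsub) hvin
      · exact ⟨s, mem_stSet_of_mem (hsub hsT), hvar, hsv⟩

/-- The axiom case: `v ∈ Tiθ` together with left minimality yields a non-variable
preimage among the subterms of `Ti`. -/
lemma axCase (C : Finset Cst) (hC : IsCS C) (θ : Subst) (hθ : IsSolution θ C)
    {Ti : Finset Tm} {w : Tm} (hmem : (Ti, w) ∈ C)
    (hbelow : ∀ c ∈ C, c.1 ⊂ Ti → c.2.IsVar) {v : Tm}
    (h : v ∈ Ti.image (Tm.subst θ))
    (hminax : ∀ T' ∈ {S | ∃ c ∈ C, S = c.1.image (Tm.subst θ)},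
      T' ⊂ Ti.image (Tm.subst θ) → Deduce T' v → ({v} : Set Tm) ⊆ ↑T') :
    ∃ s ∈ stSet Ti, ¬ s.IsVar ∧ s.subst θ = v := by
  refine varChase C hC θ hθ Ti hbelow v ?_ Ti.card Ti w le_rfl hmem subset_rfl h
  intro c' hc' hsub hded
  by_cases hEq : c'.1.image (Tm.subst θ) = Ti.image (Tm.subst θ)
  · rw [hEq]; exact h
  · have hss : c'.1.image (Tm.subst θ) ⊂ Ti.image (Tm.subst θ) :=
      Finset.ssubset_iff_subset_ne.mpr ⟨Finset.image_subset_image hsub, hEq⟩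
    exact hminax _ ⟨c', hc', rfl⟩ hss hded rfl

/-- The statement of the main lemma, as a predicate on the cardinality bound. -/
def IHn (C : Finset Cst) (θ : Subst) (n : ℕ) : Prop :=
  ∀ (Ti : Finset Tm) (w : Tm), Ti.card ≤ n → (Ti, w) ∈ C →
    (∀ c ∈ C, c.1 ⊂ Ti → c.2.IsVar) →
    ∀ (u : Tm) (π : PTree (Ti.image (Tm.subst θ)) u),
      Good {S | ∃ c ∈ C, S = c.1.image (Tm.subst θ)} π → lastIsDecomp π →
      ∃ t ∈ stSet Ti, ¬ t.IsVar ∧ t.subst θ = u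

/-- The case where the relevant immediate subterm is a variable: descend to a
strictly smaller constraint. -/
lemma varCase (C : Finset Cst) (hC : IsCS C) (θ : Subst) (hθ : IsSolution θ C)
    {n : ℕ} (ihn : IHn C θ n) {Ti : Finset Tm} {w : Tm} (hcard : Ti.card ≤ n + 1)
    (hmem : (Ti, w) ∈ C) (hbelow : ∀ c ∈ C, c.1 ⊂ Ti → c.2.IsVar)
    {u : Tm} (π : PTree (Ti.image (Tm.subst θ)) u)
    (hg : Good {S | ∃ c ∈ C, S = c.1.image (Tm.subst θ)} π) (hd : lastIsDecomp π)
    (hmr : MinRoot {S | ∃ c ∈ C, S = c.1.image (Tm.subst θ)} π)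
    {m : ℕ} (hm : m ∈ setVars Ti) (hmu : θ m = u) :
    ∃ t ∈ stSet Ti, ¬ t.IsVar ∧ t.subst θ = u := by
  obtain ⟨c', hc'C, hxc', hlt, -⟩ := hC.2.2 (Ti, w) hmem m hm
  obtain ⟨k, hk⟩ := isVar_var (hbelow c' hc'C hlt)
  have hkm : k = m := by rw [hk] at hxc'; simp [Tm.vars] at hxc'; exact hxc'.symm
  subst hkm
  have hded : Deduce (c'.1.image (Tm.subst θ)) u := by
    have h2 := hθ.2.2 c' hc'C
    rw [hk] at h2
    rw [show (Tm.var k).subst θ = θ k from rfl, hmu] at h2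
    exact h2
  have himg : c'.1.image (Tm.subst θ) ⊆ Ti.image (Tm.subst θ) :=
    Finset.image_subset_image hlt.subset
  have hax : axLeaves π ⊆ ↑(c'.1.image (Tm.subst θ)) := by
    by_cases hEq : c'.1.image (Tm.subst θ) = Ti.image (Tm.subst θ)
    · rw [hEq]; exact axLeaves_subset π
    · exact hmr _ ⟨c', hc'C, rfl⟩ (Finset.ssubset_iff_subset_ne.mpr ⟨himg, hEq⟩) hded
  obtain ⟨t, ht, h3, h4⟩ := ihn c'.1 c'.2
    (Nat.lt_succ_iff.mp (lt_of_lt_of_le (Finset.card_lt_card hlt) hcard)) hc'C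
    (fun c hc hl => hbelow c hc (hl.trans hlt)) u (relabel π hax)
    (good_relabel himg π hax hg) ((lastIsDecomp_relabel π hax).mpr hd)
  exact ⟨t, stSet_mono hlt.subset ht, h3, h4⟩

lemma mainLemma (C : Finset Cst) (hC : IsCS C) (θ : Subst) (hθ : IsSolution θ C) :
    ∀ n : ℕ, IHn C θ n := by
  intro n
  induction n with
  | zero =>
      intro Ti w hcard hmem _ u π _ _
      obtain ⟨s, hs⟩ := hC.1 (Ti, w) hmem
      rw [Finset.card_eq_zero.mp (Nat.le_zero.mp hcard)] at hs
      simp at hs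
  | succ n ihn =>
      intro Ti w hcard hmem hbelow u π
      induction π with
      | ax h => intro _ hd; simp [lastIsDecomp] at hd
      | pairI p q ihp ihq => intro _ hd; simp [lastIsDecomp] at hd
      | encI p q ihp ihq => intro _ hd; simp [lastIsDecomp] at hd
      | encaI p q ihp ihq => intro _ hd; simp [lastIsDecomp] at hd
      | signI p q ihp ihq => intro _ hd; simp [lastIsDecomp] at hd
      | @encE x y π₁ q ih₁ ih₂ =>
          intro hg _
          have hnr := hg.2.1
          have hg₁ := hg.2.2.1
          have hstep : ∃ s ∈ stSet Ti, ¬ s.IsVar ∧ s.subst θ = Tm.enc x y := by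
            cases π₁ with
            | ax hx => exact axCase C hC θ hθ hmem hbelow hx hg₁
            | encI a b =>
                exact absurd (Set.mem_union_left _ (Set.mem_insert_iff.mpr
                  (Or.inr (Set.mem_union_left _ (self_mem_labels a))))) hnr
            | encE a b => exact ih₁ hg₁ trivial
            | encaE a b => exact ih₁ hg₁ trivial
            | fstE a => exact ih₁ hg₁ trivial
            | sndE a => exact ih₁ hg₁ trivial
          obtain ⟨s, hsSt, hsNv, hsv⟩ := hstep
          obtain ⟨s₁, s₂, rfl, h1, h2⟩ := subst_eq_enc hsNv hsv
          have hs₁ : s₁ ∈ stSet Ti := stSet_closed hsSt (by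
            simp only [Tm.subterms]
            exact Finset.mem_insert.mpr (Or.inr (Finset.mem_union.mpr
              (Or.inl (Tm.self_mem_subterms s₁)))))
          by_cases hv1 : s₁.IsVar
          · obtain ⟨m, rfl⟩ := isVar_var hv1
            exact varCase C hC θ hθ ihn hcard hmem hbelow (PTree.encE π₁ q) hg trivial hg.1
              (vars_subset_setVars hs₁ (by simp [Tm.vars])) h1
          · exact ⟨s₁, hs₁, hv1, h1⟩
      | @encaE x y π₁ q ih₁ ih₂ =>
          intro hg _
          have hnr := hg.2.1
          have hg₁ := hg.2.2.1
          have hstep : ∃ s ∈ stSet Ti, ¬ s.IsVar ∧ s.subst θ = Tm.enca x y := by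
            cases π₁ with
            | ax hx => exact axCase C hC θ hθ hmem hbelow hx hg₁
            | encaI a b =>
                exact absurd (Set.mem_union_left _ (Set.mem_insert_iff.mpr
                  (Or.inr (Set.mem_union_left _ (self_mem_labels a))))) hnr
            | encE a b => exact ih₁ hg₁ trivial
            | encaE a b => exact ih₁ hg₁ trivial
            | fstE a => exact ih₁ hg₁ trivial
            | sndE a => exact ih₁ hg₁ trivial
          obtain ⟨s, hsSt, hsNv, hsv⟩ := hstep
          obtain ⟨s₁, s₂, rfl, h1, h2⟩ := subst_eq_enca hsNv hsv
          have hs₁ : s₁ ∈ stSet Ti := stSet_closed hsSt (by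
            simp only [Tm.subterms]
            exact Finset.mem_insert.mpr (Or.inr (Finset.mem_union.mpr
              (Or.inl (Tm.self_mem_subterms s₁)))))
          by_cases hv1 : s₁.IsVar
          · obtain ⟨m, rfl⟩ := isVar_var hv1
            exact varCase C hC θ hθ ihn hcard hmem hbelow (PTree.encaE π₁ q) hg trivial hg.1
              (vars_subset_setVars hs₁ (by simp [Tm.vars])) h1
          · exact ⟨s₁, hs₁, hv1, h1⟩
      | @fstE x y π₁ ih₁ =>
          intro hg _
          have hnr := hg.2.1
          have hg₁ := hg.2.2
          have hstep : ∃ s ∈ stSet Ti, ¬ s.IsVar ∧ s.subst θ = Tm.pair x y := by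
            cases π₁ with
            | ax hx => exact axCase C hC θ hθ hmem hbelow hx hg₁
            | pairI a b =>
                exact absurd (Set.mem_insert_iff.mpr
                  (Or.inr (Set.mem_union_left _ (self_mem_labels a)))) hnr
            | encE a b => exact ih₁ hg₁ trivial
            | encaE a b => exact ih₁ hg₁ trivial
            | fstE a => exact ih₁ hg₁ trivial
            | sndE a => exact ih₁ hg₁ trivial
          obtain ⟨s, hsSt, hsNv, hsv⟩ := hstep
          obtain ⟨s₁, s₂, rfl, h1, h2⟩ := subst_eq_pair hsNv hsv
          have hs₁ : s₁ ∈ stSet Ti := stSet_closed hsSt (by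
            simp only [Tm.subterms]
            exact Finset.mem_insert.mpr (Or.inr (Finset.mem_union.mpr
              (Or.inl (Tm.self_mem_subterms s₁)))))
          by_cases hv1 : s₁.IsVar
          · obtain ⟨m, rfl⟩ := isVar_var hv1
            exact varCase C hC θ hθ ihn hcard hmem hbelow (PTree.fstE π₁) hg trivial hg.1
              (vars_subset_setVars hs₁ (by simp [Tm.vars])) h1
          · exact ⟨s₁, hs₁, hv1, h1⟩
      | @sndE x y π₁ ih₁ =>
          intro hg _
          have hnr := hg.2.1
          have hg₁ := hg.2.2
          have hstep : ∃ s ∈ stSet Ti, ¬ s.IsVar ∧ s.subst θ = Tm.pair x y := by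
            cases π₁ with
            | ax hx => exact axCase C hC θ hθ hmem hbelow hx hg₁
            | pairI a b =>
                exact absurd (Set.mem_insert_iff.mpr
                  (Or.inr (Set.mem_union_right _ (self_mem_labels b)))) hnr
            | encE a b => exact ih₁ hg₁ trivial
            | encaE a b => exact ih₁ hg₁ trivial
            | fstE a => exact ih₁ hg₁ trivial
            | sndE a => exact ih₁ hg₁ trivial
          obtain ⟨s, hsSt, hsNv, hsv⟩ := hstep
          obtain ⟨s₁, s₂, rfl, h1, h2⟩ := subst_eq_pair hsNv hsv
          have hs₂ : s₂ ∈ stSet Ti := stSet_closed hsSt (by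
            simp only [Tm.subterms]
            exact Finset.mem_insert.mpr (Or.inr (Finset.mem_union.mpr
              (Or.inr (Tm.self_mem_subterms s₂)))))
          by_cases hv2 : s₂.IsVar
          · obtain ⟨m, rfl⟩ := isVar_var hv2
            exact varCase C hC θ hθ ihn hcard hmem hbelow (PTree.sndE π₁) hg trivial hg.1
              (vars_subset_setVars hs₂ (by simp [Tm.vars])) h2
          · exact ⟨s₂, hs₂, hv2, h2⟩

end Aux


/-- if `C` is a deducibility constraint system, `θ` a solution of `C`,
`Ti` a left-hand side of `C` such that all constraints with strictly smaller left-hand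
side have a variable as right-hand side, and there is a simple proof of `Tiθ ⊢ u`
whose last rule is a decomposition, then some non-variable subterm `t` of `Ti`
satisfies `tθ = u`. -/
theorem decomposition_last_rule (C : Finset Cst) (hC : IsCS C)
    (θ : Subst) (hθ : IsSolution θ C)
    (Ti : Finset Tm) (w : Tm) (hTi : (Ti, w) ∈ C)
    (hbelow : ∀ c ∈ C, c.1 ⊂ Ti → c.2.IsVar)
    (u : Tm) (π : PTree (Ti.image (Tm.subst θ)) u)
    (hsimple : SimpleFam {S | ∃ c ∈ C, S = c.1.image (Tm.subst θ)}
      (Ti.image (Tm.subst θ)) π)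
    (hdecomp : lastIsDecomp π) :
    ∃ t ∈ stSet Ti, ¬ t.IsVar ∧ t.subst θ = u := by
  have hGood := simple_good hsimple π Relation.ReflTransGen.refl
  exact mainLemma C hC θ hθ Ti.card Ti w le_rfl hTi hbelow u π hGood hdecomp
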